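/- arXiv:2308.07696 — 2 statements merged into one kernel-verified Lean document; each statement's English description precedes it below -/
import Mathlib

section
/- Fix c > 0. There exist a constant C₀ > 0 and N₀ such that for every integer N ≥ N₀ and every vertex v ∈ V_N, |Σ_{u ∈ V_N} p(v,u)² − 4c²·(log N)/N²| ≤ C₀/N². -/
open scoped BigOperators

/-- Vertices of the discrete 2-dimensional torus. -/
abbrev Vtx (N : ℕ) : Type := ZMod N × ZMod N

/-- `ρ_N(i)`: for a residue represented in `{0,…,N−1}`, `ρ_N(i) = i` if `i ≤ N/2`
and `ρ_N(i) = N − i` otherwise. -/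
def rhoN (N : ℕ) (i : ZMod N) : ℕ :=
  if 2 * i.val ≤ N then i.val else N - i.val

/-- Torus distance `ρ(u,v) = ρ_N(u₁ − v₁) + ρ_N(u₂ − v₂)`. -/
def torusDist (N : ℕ) (u v : Vtx N) : ℕ :=
  rhoN N (u.1 - v.1) + rhoN N (u.2 - v.2)

/-- Connection probability `p(u,v) = min(c/(N·ρ(u,v)), 1)` for `u ≠ v`, `p(u,u) = 0`. -/
noncomputable def edgeProb (N : ℕ) (c : ℝ) (u v : Vtx N) : ℝ :=
  if u = v then 0 else min (c / ((N : ℝ) * (torusDist N u v : ℝ))) 1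

/- ───────────────────── auxiliary development ───────────────────── -/

open Finset

noncomputable def gfun (k : ℕ) : ℝ := if k = 0 then 0 else 1 / (k : ℝ) ^ 2

lemma gfun_nonneg (k : ℕ) : 0 ≤ gfun k := by
  unfold gfun; split
  · exact le_refl 0
  · positivity

lemma gfun_of_ne {k : ℕ} (hk : k ≠ 0) : gfun k = 1 / (k : ℝ) ^ 2 := if_neg hk

lemma sum_invsq_le (a : ℕ) (ha : 1 ≤ a) {b : ℕ} (hb : a ≤ b) :
    ∑ t ∈ Icc (a + 1) b, (1 : ℝ) / (t : ℝ) ^ 2 ≤ 1 / (a : ℝ) - 1 / (b : ℝ) := by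
  induction b, hb using Nat.le_induction with
  | base => rw [Finset.Icc_eq_empty (by omega)]; simp
  | succ b hb ih =>
    rw [Finset.sum_Icc_succ_top (by omega)]
    have h1 : (1 : ℝ) ≤ (a : ℝ) := by exact_mod_cast ha
    have h2 : (a : ℝ) ≤ (b : ℝ) := by exact_mod_cast hb
    have hbp : (1 : ℝ) ≤ (b : ℝ) := h1.trans h2
    have key : (1 : ℝ) / ((b : ℝ) + 1) ^ 2 ≤ 1 / (b : ℝ) - 1 / ((b : ℝ) + 1) := by
      rw [div_sub_div _ _ (by linarith) (by linarith)]
      rw [div_le_div_iff₀ (by positivity) (by positivity)]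
      nlinarith
    push_cast
    linarith

lemma sum_invsq_ge (a : ℕ) {b : ℕ} (hb : a ≤ b) :
    1 / ((a : ℝ) + 1) - 1 / ((b : ℝ) + 1) ≤ ∑ t ∈ Icc (a + 1) b, (1 : ℝ) / (t : ℝ) ^ 2 := by
  induction b, hb using Nat.le_induction with
  | base => rw [Finset.Icc_eq_empty (by omega)]; simp
  | succ b hb ih =>
    rw [Finset.sum_Icc_succ_top (by omega)]
    have h2 : (a : ℝ) ≤ (b : ℝ) := by exact_mod_cast hb
    have hbp : (0 : ℝ) ≤ (b : ℝ) := le_trans (Nat.cast_nonneg a) h2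
    have key : 1 / ((b : ℝ) + 1) - 1 / ((b : ℝ) + 1 + 1) ≤ (1 : ℝ) / ((b : ℝ) + 1) ^ 2 := by
      rw [div_sub_div _ _ (by linarith) (by linarith)]
      rw [div_le_div_iff₀ (by positivity) (by positivity)]
      nlinarith
    push_cast
    linarith

lemma harm_ge (n : ℕ) : Real.log ((n : ℝ) + 1) ≤ ∑ k ∈ Icc 1 n, (1 : ℝ) / (k : ℝ) := by
  induction n with
  | zero => simp
  | succ n ih =>
    rw [Finset.sum_Icc_succ_top (by omega)]
    have hpos1 : (0 : ℝ) < (n : ℝ) + 1 := by positivity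
    have hpos2 : (0 : ℝ) < (n : ℝ) + 1 + 1 := by positivity
    have hlog := Real.log_le_sub_one_of_pos (show (0:ℝ) < ((n:ℝ)+1+1)/((n:ℝ)+1) by positivity)
    rw [Real.log_div (by linarith) (by linarith)] at hlog
    have heq : ((n : ℝ) + 1 + 1) / ((n : ℝ) + 1) - 1 = 1 / ((n : ℝ) + 1) := by
      field_simp
      ring
    rw [heq] at hlog
    push_cast
    linarith

lemma harm_le {n : ℕ} (hn : 1 ≤ n) :
    ∑ k ∈ Icc 1 n, (1 : ℝ) / (k : ℝ) ≤ 1 + Real.log (n : ℝ) := by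
  induction n, hn using Nat.le_induction with
  | base => simp
  | succ n hn ih =>
    rw [Finset.sum_Icc_succ_top (by omega)]
    have hn1 : (1 : ℝ) ≤ (n : ℝ) := by exact_mod_cast hn
    have hlog := Real.log_le_sub_one_of_pos (show (0:ℝ) < (n:ℝ)/((n:ℝ)+1) by positivity)
    rw [Real.log_div (by linarith) (by linarith)] at hlog
    have heq : (n : ℝ) / ((n : ℝ) + 1) - 1 = -(1 / ((n : ℝ) + 1)) := by
      field_simp
      ring
    rw [heq] at hlog
    push_cast
    linarith

lemma sum_invsq_from_one (b : ℕ) :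
    ∑ t ∈ Icc 1 b, (1 : ℝ) / (t : ℝ) ^ 2 ≤ 2 := by
  rcases Nat.eq_zero_or_pos b with hb | hb
  · subst hb; simp
  · have hsplit : ∑ t ∈ Icc 1 b, (1 : ℝ) / (t : ℝ) ^ 2
        = (1 : ℝ) / ((1 : ℕ) : ℝ) ^ 2 + ∑ t ∈ Icc (1 + 1) b, (1 : ℝ) / (t : ℝ) ^ 2 := by
      rw [← Finset.Ico_add_one_right_eq_Icc, Finset.sum_eq_sum_Ico_succ_bot (by omega), Finset.Ico_add_one_right_eq_Icc]
    have h2 := sum_invsq_le 1 le_rfl hb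
    have hb0 : (0 : ℝ) ≤ 1 / (b : ℝ) := by positivity
    have e1 : (1 : ℝ) / ((1 : ℕ) : ℝ) ^ 2 = 1 := by norm_num
    have e2 : (1 : ℝ) / ((1 : ℕ) : ℝ) = 1 := by norm_num
    rw [hsplit, e1]
    rw [e2] at h2
    linarith

/-- Sum over `ZMod N` as a sum over `range N`. -/
lemma zmod_sum_eq_range (N : ℕ) [NeZero N] (f : ZMod N → ℝ) :
    ∑ a : ZMod N, f a = ∑ i ∈ range N, f (i : ZMod N) := by
  refine Finset.sum_nbij' (fun (a : ZMod N) => a.val) (fun i => ((i : ℕ) : ZMod N))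
    ?_ ?_ ?_ ?_ ?_
  · intro a _; exact Finset.mem_range.mpr (ZMod.val_lt a)
  · intro i _; exact Finset.mem_univ _
  · intro a _; exact ZMod.natCast_rightInverse a
  · intro i hi; exact ZMod.val_natCast_of_lt (Finset.mem_range.mp hi)
  · intro a _
    rw [ZMod.natCast_rightInverse a]

lemma rhoN_natCast (N i : ℕ) [NeZero N] (hi : i < N) :
    rhoN N ((i : ℕ) : ZMod N) = if 2 * i ≤ N then i else N - i := by
  unfold rhoN
  rw [ZMod.val_natCast_of_lt hi]

/-- Reindexing a sum of `h ∘ rhoN` over `ZMod N`. -/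
lemma zmod_rho_sum (N : ℕ) [NeZero N] (h : ℕ → ℝ) :
    ∑ a : ZMod N, h (rhoN N a)
      = ∑ i ∈ range (N / 2 + 1), h i + ∑ i ∈ Icc 1 (N - 1 - N / 2), h i := by
  have hN : 1 ≤ N := Nat.one_le_iff_ne_zero.mpr (NeZero.ne N)
  rw [zmod_sum_eq_range]
  have hsplit : N / 2 + 1 ≤ N := by omega
  rw [Finset.range_eq_Ico, ← Finset.sum_Ico_consecutive _ (Nat.zero_le (N / 2 + 1)) hsplit]
  congr 1
  · rw [← Finset.range_eq_Ico]
    refine Finset.sum_congr rfl ?_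
    intro i hi
    have hi' := Finset.mem_range.mp hi
    rw [rhoN_natCast N i (by omega), if_pos (by omega)]
  · refine Finset.sum_nbij' (fun i => N - i) (fun i => N - i) ?_ ?_ ?_ ?_ ?_
    · intro i hi
      simp only [Finset.mem_Ico] at hi
      simp only [Finset.mem_Icc]
      omega
    · intro i hi
      simp only [Finset.mem_Icc] at hi
      simp only [Finset.mem_Ico]
      omega
    · intro i hi; simp only [Finset.mem_Ico] at hi; show N - (N - i) = i; omega
    · intro i hi; simp only [Finset.mem_Icc] at hi; show N - (N - i) = i; omega
    · intro i hi
      simp only [Finset.mem_Ico] at hi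
      rw [rhoN_natCast N i (by omega), if_neg (by omega)]

lemma sum_shift (F : ℕ → ℝ) (j m : ℕ) :
    ∑ l ∈ range (m + 1), F (j + l) = ∑ t ∈ Icc j (j + m), F t := by
  have h : ∑ t ∈ Ico j (j + (m + 1)), F t = ∑ l ∈ range (m + 1), F (j + l) := by
    rw [Finset.sum_Ico_eq_sum_range, Nat.add_sub_cancel_left]
  rw [← Finset.Ico_add_one_right_eq_Icc, show j + m + 1 = j + (m + 1) from by omega, h]

lemma sum_shift_Icc (F : ℕ → ℝ) (j m : ℕ) :
    ∑ l ∈ Icc 1 m, F (j + l) = ∑ t ∈ Icc (j + 1) (j + m), F t := by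
  rw [← Finset.Ico_add_one_right_eq_Icc, ← Finset.Ico_add_one_right_eq_Icc, Finset.sum_Ico_eq_sum_range,
    Finset.sum_Ico_eq_sum_range]
  have e1 : m + 1 - 1 = m := by omega
  have e2 : j + m + 1 - (j + 1) = m := by omega
  rw [e1, e2]
  refine Finset.sum_congr rfl ?_
  intro i _
  congr 1
  omega

lemma inner_upper {m j : ℕ} (hj : 1 ≤ j) :
    ∑ l ∈ range (m + 1), gfun (j + l) ≤ 1 / (j : ℝ) ^ 2 + 1 / (j : ℝ) := by
  rw [sum_shift]
  have h1 : ∑ t ∈ Icc j (j + m), gfun t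
      = gfun j + ∑ t ∈ Icc (j + 1) (j + m), gfun t := by
    rw [← Finset.Ico_add_one_right_eq_Icc, Finset.sum_eq_sum_Ico_succ_bot (by omega), Finset.Ico_add_one_right_eq_Icc]
  have h2 : ∑ t ∈ Icc (j + 1) (j + m), gfun t
      = ∑ t ∈ Icc (j + 1) (j + m), (1 : ℝ) / (t : ℝ) ^ 2 := by
    refine Finset.sum_congr rfl ?_
    intro t ht
    have := (Finset.mem_Icc.mp ht).1
    exact gfun_of_ne (by omega)
  have h3 := sum_invsq_le j hj (Nat.le_add_right j m)
  have hjm : (0 : ℝ) < ((j + m : ℕ) : ℝ) := by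
    have : (0 : ℕ) < j + m := by omega
    exact_mod_cast this
  have h4 : (0 : ℝ) ≤ 1 / ((j + m : ℕ) : ℝ) := by positivity
  rw [h1, h2, gfun_of_ne (by omega : j ≠ 0)]
  linarith

lemma inner_lower {m j : ℕ} (hj : 1 ≤ j) (hm : 1 ≤ m) :
    1 / ((j : ℝ) + 1) - 1 / ((m : ℝ) + 2) ≤ ∑ l ∈ Icc 1 m, gfun (j + l) := by
  rw [sum_shift_Icc]
  have h2 : ∑ t ∈ Icc (j + 1) (j + m), gfun t
      = ∑ t ∈ Icc (j + 1) (j + m), (1 : ℝ) / (t : ℝ) ^ 2 := by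
    refine Finset.sum_congr rfl ?_
    intro t ht
    have := (Finset.mem_Icc.mp ht).1
    exact gfun_of_ne (by omega)
  rw [h2]
  have h3 := sum_invsq_ge j (Nat.le_add_right j m)
  have hcast : ((j + m : ℕ) : ℝ) = (j : ℝ) + (m : ℝ) := by push_cast; ring
  rw [hcast] at h3
  have hj1 : (1 : ℝ) ≤ (j : ℝ) := by exact_mod_cast hj
  have h4 : 1 / ((j : ℝ) + (m : ℝ) + 1) ≥ 0 := by
    have hm0 : (0 : ℝ) ≤ (m : ℝ) := Nat.cast_nonneg m
    positivity
  have h5 : 1 / ((j : ℝ) + (m : ℝ) + 1) ≤ 1 / ((m : ℝ) + 2) := by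
    apply div_le_div_of_nonneg_left (by norm_num) (by positivity)
    linarith
  linarith

/-- Upper bound for the full box sum. -/
lemma box_upper {N : ℕ} (hN : 3 ≤ N) :
    ∑ j ∈ range (N / 2 + 1), ∑ l ∈ range (N / 2 + 1), gfun (j + l)
      ≤ Real.log (N : ℝ) + 5 := by
  set m := N / 2 with hm
  have hm1 : 1 ≤ m := by omega
  have hsplit : ∀ (F : ℕ → ℝ), ∑ j ∈ range (m + 1), F j = F 0 + ∑ j ∈ Icc 1 m, F j := by
    intro F
    rw [Finset.range_eq_Ico, Finset.sum_eq_sum_Ico_succ_bot (by omega), Finset.Ico_add_one_right_eq_Icc]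
  rw [hsplit]
  have hzero : ∑ l ∈ range (m + 1), gfun (0 + l) ≤ 2 := by
    have e : ∑ l ∈ range (m + 1), gfun (0 + l) = ∑ l ∈ Icc 1 m, (1 : ℝ) / (l : ℝ) ^ 2 := by
      rw [hsplit]
      have h0 : gfun (0 + 0) = 0 := if_pos rfl
      rw [h0, zero_add]
      refine Finset.sum_congr rfl ?_
      intro l hl
      have := (Finset.mem_Icc.mp hl).1
      rw [show (0 : ℕ) + l = l by omega]
      exact gfun_of_ne (by omega)
    rw [e]
    exact sum_invsq_from_one m
  have hrest : ∑ j ∈ Icc 1 m, (∑ l ∈ range (m + 1), gfun (j + l))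
      ≤ 2 + (1 + Real.log (m : ℝ)) := by
    calc ∑ j ∈ Icc 1 m, (∑ l ∈ range (m + 1), gfun (j + l))
        ≤ ∑ j ∈ Icc 1 m, ((1 : ℝ) / (j : ℝ) ^ 2 + 1 / (j : ℝ)) := by
          refine Finset.sum_le_sum ?_
          intro j hj
          exact inner_upper (Finset.mem_Icc.mp hj).1
      _ = (∑ j ∈ Icc 1 m, (1 : ℝ) / (j : ℝ) ^ 2) + ∑ j ∈ Icc 1 m, (1 : ℝ) / (j : ℝ) :=
          Finset.sum_add_distrib
      _ ≤ 2 + (1 + Real.log (m : ℝ)) := by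
          have h1 := sum_invsq_from_one m
          have h2 := harm_le hm1
          linarith
  have hlog : Real.log (m : ℝ) ≤ Real.log (N : ℝ) := by
    apply Real.log_le_log (by exact_mod_cast hm1)
    exact_mod_cast Nat.div_le_self N 2
  linarith

/-- Lower bound for the small box sum. -/
lemma box_lower {N : ℕ} (hN : 3 ≤ N) :
    Real.log (N : ℝ) - Real.log 2 - 2
      ≤ ∑ j ∈ Icc 1 (N - 1 - N / 2), ∑ l ∈ Icc 1 (N - 1 - N / 2), gfun (j + l) := by
  set m := N - 1 - N / 2 with hm
  have hm1 : 1 ≤ m := by omega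
  have step1 : ∑ j ∈ Icc 1 m, (1 / ((j : ℝ) + 1) - 1 / ((m : ℝ) + 2))
      ≤ ∑ j ∈ Icc 1 m, ∑ l ∈ Icc 1 m, gfun (j + l) := by
    refine Finset.sum_le_sum ?_
    intro j hj
    exact inner_lower (Finset.mem_Icc.mp hj).1 hm1
  have step2 : ∑ j ∈ Icc 1 m, (1 / ((j : ℝ) + 1) - 1 / ((m : ℝ) + 2))
      = (∑ j ∈ Icc 1 m, 1 / ((j : ℝ) + 1)) - (m : ℝ) * (1 / ((m : ℝ) + 2)) := by
    rw [Finset.sum_sub_distrib, Finset.sum_const, Nat.card_Icc]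
    simp [nsmul_eq_mul]
  have step3 : ∑ j ∈ Icc 1 m, 1 / ((j : ℝ) + 1)
      = ∑ t ∈ Icc (1 + 1) (1 + m), (1 : ℝ) / (t : ℝ) := by
    rw [← sum_shift_Icc (fun k => (1 : ℝ) / (k : ℝ)) 1 m]
    refine Finset.sum_congr rfl ?_
    intro j _
    push_cast
    ring_nf
  have step4 : ∑ t ∈ Icc (1 + 1) (1 + m), (1 : ℝ) / (t : ℝ)
      = (∑ t ∈ Icc 1 (m + 1), (1 : ℝ) / (t : ℝ)) - 1 := by
    have : ∑ t ∈ Icc 1 (m + 1), (1 : ℝ) / (t : ℝ)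
        = (1 : ℝ) / ((1 : ℕ) : ℝ) + ∑ t ∈ Icc (1 + 1) (m + 1), (1 : ℝ) / (t : ℝ) := by
      rw [← Finset.Ico_add_one_right_eq_Icc, Finset.sum_eq_sum_Ico_succ_bot (by omega), Finset.Ico_add_one_right_eq_Icc]
    rw [show 1 + m = m + 1 by ring, this]
    norm_num
  have step5 := harm_ge (m + 1)
  have hlogle : Real.log ((N : ℝ) / 2) ≤ Real.log ((m : ℝ) + 1 + 1) := by
    apply Real.log_le_log (by positivity)
    have h2 : N ≤ 2 * (m + 2) := by omega
    have h2' : (N : ℝ) ≤ 2 * ((m : ℝ) + 2) := by exact_mod_cast h2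
    linarith
  have hlogdiv : Real.log ((N : ℝ) / 2) = Real.log (N : ℝ) - Real.log 2 := by
    rw [Real.log_div (by positivity) (by norm_num)]
  have hm2 : (0 : ℝ) < (m : ℝ) + 2 := by positivity
  have hfrac : (m : ℝ) * (1 / ((m : ℝ) + 2)) ≤ 1 := by
    rw [mul_one_div, div_le_one hm2]
    linarith
  have hcast : ((m + 1 : ℕ) : ℝ) = (m : ℝ) + 1 := by push_cast; ring
  rw [hcast] at step5
  linarith

/-- The key combinatorial estimate: `|S − 4 log N| ≤ 20`. -/
lemma S_bound (N : ℕ) [NeZero N] (hN : 3 ≤ N) :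
    |(∑ w : Vtx N, gfun (rhoN N w.1 + rhoN N w.2)) - 4 * Real.log (N : ℝ)| ≤ 20 := by
  set m := N / 2 with hm
  set m' := N - 1 - N / 2 with hm'
  set I₁ : Finset ℕ := range (m + 1) with hI₁
  set I₂ : Finset ℕ := Icc 1 m' with hI₂
  have hsub : I₂ ⊆ I₁ := by
    intro i hi
    simp only [hI₂, Finset.mem_Icc] at hi
    simp only [hI₁, Finset.mem_range]
    omega
  set D : Finset ℕ → Finset ℕ → ℝ := fun P Q => ∑ j ∈ P, ∑ l ∈ Q, gfun (j + l) with hD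
  have hmono : ∀ P P' Q Q' : Finset ℕ, P ⊆ P' → Q ⊆ Q' → D P Q ≤ D P' Q' := by
    intro P P' Q Q' hP hQ
    refine le_trans (Finset.sum_le_sum ?_) (Finset.sum_le_sum_of_subset_of_nonneg hP ?_)
    · intro j _
      exact Finset.sum_le_sum_of_subset_of_nonneg hQ (fun l _ _ => gfun_nonneg _)
    · intro j _ _
      exact Finset.sum_nonneg fun l _ => gfun_nonneg _
  have hS : (∑ w : Vtx N, gfun (rhoN N w.1 + rhoN N w.2))
      = D I₁ I₁ + D I₁ I₂ + (D I₂ I₁ + D I₂ I₂) := by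
    rw [Fintype.sum_prod_type]
    have hinner : ∀ a : ZMod N, ∑ b : ZMod N, gfun (rhoN N a + rhoN N b)
        = (∑ l ∈ I₁, gfun (rhoN N a + l)) + ∑ l ∈ I₂, gfun (rhoN N a + l) :=
      fun a => zmod_rho_sum N (fun l => gfun (rhoN N a + l))
    calc ∑ a : ZMod N, ∑ b : ZMod N, gfun (rhoN N a + rhoN N b)
        = ∑ a : ZMod N, ((∑ l ∈ I₁, gfun (rhoN N a + l)) + ∑ l ∈ I₂, gfun (rhoN N a + l)) :=
          Finset.sum_congr rfl (fun a _ => hinner a)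
      _ = (∑ a : ZMod N, ∑ l ∈ I₁, gfun (rhoN N a + l))
            + ∑ a : ZMod N, ∑ l ∈ I₂, gfun (rhoN N a + l) := Finset.sum_add_distrib
      _ = D I₁ I₁ + D I₁ I₂ + (D I₂ I₁ + D I₂ I₂) := by
          rw [zmod_rho_sum N (fun j => ∑ l ∈ I₁, gfun (j + l)),
            zmod_rho_sum N (fun j => ∑ l ∈ I₂, gfun (j + l))]
          ring
  have hup : ∀ P Q, P ⊆ I₁ → Q ⊆ I₁ → D P Q ≤ Real.log (N : ℝ) + 5 := by
    intro P Q hP hQ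
    exact le_trans (hmono P I₁ Q I₁ hP hQ) (box_upper hN)
  have hlow : ∀ P Q, I₂ ⊆ P → I₂ ⊆ Q → Real.log (N : ℝ) - Real.log 2 - 2 ≤ D P Q := by
    intro P Q hP hQ
    exact le_trans (box_lower hN) (hmono I₂ P I₂ Q hP hQ)
  have hlog2 : Real.log 2 ≤ 1 := by
    have := Real.log_le_sub_one_of_pos (show (0:ℝ) < 2 by norm_num)
    linarith
  rw [hS, abs_le]
  constructor
  · have h1 := hlow I₁ I₁ hsub hsub
    have h2 := hlow I₁ I₂ hsub (subset_refl I₂)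
    have h3 := hlow I₂ I₁ (subset_refl I₂) hsub
    have h4 := hlow I₂ I₂ (subset_refl I₂) (subset_refl I₂)
    linarith
  · have h1 := hup I₁ I₁ (subset_refl I₁) (subset_refl I₁)
    have h2 := hup I₁ I₂ (subset_refl I₁) hsub
    have h3 := hup I₂ I₁ hsub (subset_refl I₁)
    have h4 := hup I₂ I₂ hsub hsub
    linarith

lemma rhoN_zero (N : ℕ) [NeZero N] : rhoN N 0 = 0 := by
  unfold rhoN
  rw [ZMod.val_zero]
  simp

lemma rhoN_eq_zero {N : ℕ} [NeZero N] {a : ZMod N} (h : rhoN N a = 0) : a = 0 := by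
  unfold rhoN at h
  split at h
  · exact (ZMod.val_eq_zero a).mp h
  · exfalso
    have := ZMod.val_lt a
    omega

/-- For `c > 0` there are `C₀ > 0` and `N₀` such that for every `N ≥ N₀` and every
vertex `v`, `|Σ_u p(v,u)² − 4c²·(log N)/N²| ≤ C₀/N²`. -/
theorem stmt5 (c : ℝ) (hc : 0 < c) :
    ∃ C₀ : ℝ, 0 < C₀ ∧ ∃ N₀ : ℕ, ∀ (N : ℕ) [NeZero N], N₀ ≤ N →
      ∀ v : Vtx N,
        |(∑ u : Vtx N, (edgeProb N c v u) ^ 2) -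
            4 * c ^ 2 * Real.log N / (N : ℝ) ^ 2| ≤ C₀ / (N : ℝ) ^ 2 := by
  refine ⟨20 * c ^ 2, by positivity, max 3 ⌈c⌉₊, ?_⟩
  intro N _ hN v
  have hN3 : 3 ≤ N := le_trans (le_max_left _ _) hN
  have hcN : c ≤ (N : ℝ) := by
    have h1 : ⌈c⌉₊ ≤ N := le_trans (le_max_right _ _) hN
    exact le_trans (Nat.le_ceil c) (by exact_mod_cast h1)
  have hNpos : (0 : ℝ) < (N : ℝ) := by
    have : 0 < N := by omega
    exact_mod_cast this
  -- reindex the sum by w = v - u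
  have hre : ∑ u : Vtx N, (edgeProb N c v u) ^ 2
      = ∑ w : Vtx N, (edgeProb N c v (v - w)) ^ 2 := by
    exact (Equiv.sum_comp (Equiv.subLeft v) (fun u => (edgeProb N c v u) ^ 2)).symm
  have hpt : ∀ w : Vtx N, (edgeProb N c v (v - w)) ^ 2
      = c ^ 2 / (N : ℝ) ^ 2 * gfun (rhoN N w.1 + rhoN N w.2) := by
    intro w
    by_cases hw : w = 0
    · subst hw
      rw [sub_zero]
      unfold edgeProb
      rw [if_pos rfl]
      simp only [Prod.fst_zero, Prod.snd_zero, rhoN_zero]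
      simp [gfun]
    · have hne : v ≠ v - w := by
        intro h
        apply hw
        have := sub_eq_self.mp h.symm
        exact this
      unfold edgeProb
      rw [if_neg hne]
      have hdist : torusDist N v (v - w) = rhoN N w.1 + rhoN N w.2 := by
        unfold torusDist
        have e1 : v.1 - (v - w).1 = w.1 := by
          simp [Prod.fst_sub, sub_sub_cancel]
        have e2 : v.2 - (v - w).2 = w.2 := by
          simp [Prod.snd_sub, sub_sub_cancel]
        rw [e1, e2]
      rw [hdist]
      set k := rhoN N w.1 + rhoN N w.2 with hk
      have hk1 : 1 ≤ k := by
        rcases Nat.eq_zero_or_pos k with h | h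
        · exfalso
          apply hw
          have h1 : rhoN N w.1 = 0 := by omega
          have h2 : rhoN N w.2 = 0 := by omega
          have := rhoN_eq_zero h1
          have := rhoN_eq_zero h2
          exact Prod.ext ‹w.1 = 0› ‹w.2 = 0›
        · exact h
      have hkR : (1 : ℝ) ≤ (k : ℝ) := by exact_mod_cast hk1
      have hmin : min (c / ((N : ℝ) * (k : ℝ))) 1 = c / ((N : ℝ) * (k : ℝ)) := by
        apply min_eq_left
        rw [div_le_one (by positivity)]
        calc c ≤ (N : ℝ) := hcN
          _ ≤ (N : ℝ) * (k : ℝ) := by nlinarith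
      rw [hmin, gfun_of_ne (by omega : k ≠ 0)]
      field_simp
  rw [hre]
  have hsum : ∑ w : Vtx N, (edgeProb N c v (v - w)) ^ 2
      = c ^ 2 / (N : ℝ) ^ 2 * ∑ w : Vtx N, gfun (rhoN N w.1 + rhoN N w.2) := by
    rw [Finset.mul_sum]
    exact Finset.sum_congr rfl fun w _ => hpt w
  rw [hsum]
  have hfactor : c ^ 2 / (N : ℝ) ^ 2 * (∑ w : Vtx N, gfun (rhoN N w.1 + rhoN N w.2))
      - 4 * c ^ 2 * Real.log (N : ℝ) / (N : ℝ) ^ 2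
      = c ^ 2 / (N : ℝ) ^ 2
        * ((∑ w : Vtx N, gfun (rhoN N w.1 + rhoN N w.2)) - 4 * Real.log (N : ℝ)) := by
    field_simp
  rw [hfactor, abs_mul, abs_of_nonneg (by positivity : (0:ℝ) ≤ c ^ 2 / (N : ℝ) ^ 2)]
  have := S_bound N hN3
  calc c ^ 2 / (N : ℝ) ^ 2
        * |(∑ w : Vtx N, gfun (rhoN N w.1 + rhoN N w.2)) - 4 * Real.log (N : ℝ)|
      ≤ c ^ 2 / (N : ℝ) ^ 2 * 20 := by
        apply mul_le_mul_of_nonneg_left this (by positivity)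
    _ = 20 * c ^ 2 / (N : ℝ) ^ 2 := by ring
end

section
/- Let c = c^cr = 1/(4 log 2). There exists N₀ such that for every integer N ≥ N₀, Σ_{r=1}^{N} N_r·(−log(1 − p_r)) ≤ 1. (Consequently the degree of a vertex in the critical graph G_N^c is stochastically dominated by a Poisson random variable with mean 1.) -/
open scoped BigOperators

/-- The critical value `c^cr = 1/(4 log 2)`. -/
noncomputable def ccr : ℝ := 1 / (4 * Real.log 2)

/-- `p_r = min(c/(N·r), 1)`. -/
noncomputable def pr (N : ℕ) (c : ℝ) (r : ℕ) : ℝ :=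
  min (c / ((N : ℝ) * (r : ℝ))) 1

/-- `N_r`: the number of vertices at torus distance `r` from a fixed vertex
(independent of the vertex; here the vertex `0` is used). -/
noncomputable def Nr (N : ℕ) (r : ℕ) : ℕ :=
  {u : Vtx N | torusDist N u 0 = r}.ncard

open Finset

noncomputable def Hh (n : ℕ) : ℝ := ∑ r ∈ Finset.Icc 1 n, (1:ℝ)/r
noncomputable def Gg (n : ℕ) : ℝ := n * Hh n - n
noncomputable def Ff (r : ℕ) : ℝ := if r = 0 then 0 else 1/r
def mm (N i : ℕ) : ℕ := min i (N - i)

lemma Hh_zero : Hh 0 = 0 := by simp [Hh]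

lemma Hh_succ (n : ℕ) : Hh (n+1) = Hh n + 1/(n+1 : ℝ) := by
  rw [Hh, Hh, Finset.sum_Icc_succ_top (by omega : 1 ≤ n + 1)]
  push_cast; ring

lemma Hh_one : Hh 1 = 1 := by rw [show (1:ℕ) = 0 + 1 from rfl, Hh_succ, Hh_zero]; norm_num

lemma Gg_succ (n : ℕ) : Gg (n+1) = Gg n + Hh n := by
  rw [Gg, Gg, Hh_succ]
  have : ((n:ℝ)+1) ≠ 0 := by positivity
  push_cast; field_simp; ring

lemma Gg_one : Gg 1 = 0 := by simp [Gg, Hh_one]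

lemma Ff_zero : Ff 0 = 0 := by simp [Ff]

lemma Ff_eq (r : ℕ) (h : r ≠ 0) : Ff r = 1/(r:ℝ) := by simp [Ff, h]

lemma sum_Ff_range (p : ℕ) : ∑ a ∈ Finset.range (p+1), Ff a = Hh p := by
  induction p with
  | zero => simp [Ff, Hh]
  | succ p ih =>
      rw [Finset.sum_range_succ, ih, Hh_succ, Ff_eq _ (by omega)]
      push_cast; ring

lemma strip (q : ℕ) (P : ℕ) :
    ∑ a ∈ Finset.range P, Ff (a+(q+1)) = Hh (q+P) - Hh q := by
  induction P with
  | zero => simp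
  | succ P ih =>
      rw [Finset.sum_range_succ, ih, Ff_eq _ (by omega),
        show q + (P+1) = (q+P) + 1 from by omega, Hh_succ]
      push_cast; ring

lemma Rlem (p : ℕ) (q : ℕ) :
    ∑ a ∈ Finset.range (p+1), ∑ b ∈ Finset.range (q+1), Ff (a+b)
      = Gg (p+q+1) - Gg p - Gg (q+1) + Hh q := by
  induction q with
  | zero =>
      simp only [show (0:ℕ)+1 = 1 from rfl, Finset.range_one, Finset.sum_singleton,
        Nat.add_zero]
      rw [sum_Ff_range, Hh_zero, Gg_succ, Gg_one]
      ring
  | succ q ih =>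
      have step : ∀ a ∈ Finset.range (p+1),
          ∑ b ∈ Finset.range (q+1+1), Ff (a+b)
            = (∑ b ∈ Finset.range (q+1), Ff (a+b)) + Ff (a+(q+1)) := by
        intro a _; rw [Finset.sum_range_succ]
      rw [Finset.sum_congr rfl step, Finset.sum_add_distrib, ih, strip q (p+1)]
      have e1 : Gg (p+(q+1)+1) = Gg (p+q+1) + Hh (p+q+1) := by
        rw [show p+(q+1)+1 = (p+q+1)+1 from by omega, Gg_succ]
      have e2 : Gg (q+1+1) = Gg (q+1) + Hh (q+1) := Gg_succ (q+1)
      have e3 : q + (p+1) = p+q+1 := by omega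
      rw [e3, e1, e2]
      ring

lemma mm_low {N i : ℕ} (h : i ≤ N/2) : mm N i = i := by
  rw [mm, Nat.min_def]
  split_ifs with h' <;> omega

lemma mm_high {N i : ℕ} (h : N/2 < i) (h2 : i ≤ N) : mm N i = N - i := by
  rw [mm, Nat.min_def]
  split_ifs with h' <;> omega

lemma phi_split (N : ℕ) (hN : 1 ≤ N) (G : ℕ → ℝ) :
    ∑ i ∈ Finset.range N, G (mm N i)
      = ∑ a ∈ Finset.range (N/2+1), G a + ∑ a ∈ Finset.range (N-1-N/2+1), G a - G 0 := by
  have h1 : N/2 + 1 ≤ N ∨ N/2 + 1 = N ∨ N = 1 := by omega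
  have hsplit : ∑ i ∈ Finset.range N, G (mm N i)
      = ∑ i ∈ Finset.Ico 0 (N/2+1), G (mm N i) + ∑ i ∈ Finset.Ico (N/2+1) N, G (mm N i) := by
    rw [Finset.range_eq_Ico, ← Finset.sum_Ico_consecutive _ (by omega : 0 ≤ N/2+1)
      (by omega : N/2+1 ≤ N)]
  have hA : ∑ i ∈ Finset.Ico 0 (N/2+1), G (mm N i) = ∑ a ∈ Finset.range (N/2+1), G a := by
    rw [← Finset.range_eq_Ico]
    refine Finset.sum_congr rfl fun i hi => ?_
    rw [mm_low (by simp at hi; omega)]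
  have hB : ∑ i ∈ Finset.Ico (N/2+1) N, G (mm N i)
      = ∑ j ∈ Finset.Ico 1 (N-1-N/2+1), G j := by
    refine Finset.sum_nbij' (fun i => N - i) (fun j => N - j) ?_ ?_ ?_ ?_ ?_
    · intro i hi; simp only [Finset.mem_Ico] at hi ⊢; omega
    · intro j hj; simp only [Finset.mem_Ico] at hj ⊢; omega
    · intro i hi; simp only [Finset.mem_Ico] at hi; show N - (N - i) = i; omega
    · intro j hj; simp only [Finset.mem_Ico] at hj; show N - (N - j) = j; omega
    · intro i hi; simp only [Finset.mem_Ico] at hi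
      rw [mm_high (by omega) (by omega)]
  have hC : ∑ j ∈ Finset.Ico 1 (N-1-N/2+1), G j
      = ∑ a ∈ Finset.range (N-1-N/2+1), G a - G 0 := by
    have : ∑ a ∈ Finset.range (N-1-N/2+1), G a
        = ∑ j ∈ Finset.Ico 0 1, G j + ∑ j ∈ Finset.Ico 1 (N-1-N/2+1), G j := by
      rw [Finset.range_eq_Ico, ← Finset.sum_Ico_consecutive _ (by omega : 0 ≤ 1)
        (by omega : 1 ≤ N-1-N/2+1)]
    simp only [show Finset.Ico 0 1 = {0} from rfl, Finset.sum_singleton] at this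
    linarith
  rw [hsplit, hA, hB, hC]; ring

noncomputable def S1sum (N : ℕ) : ℝ :=
  ∑ i ∈ Finset.range N, ∑ j ∈ Finset.range N, Ff (mm N i + mm N j)

lemma S1_eq (N : ℕ) (hN : 1 ≤ N) :
    S1sum N = Gg (2*(N/2)+1) + Gg (2*(N-1-N/2)+1) + 2*Gg N
      - 4*Gg (N/2) - 4*Gg (N-1-N/2) - 2*Hh (N/2) - 2*Hh (N-1-N/2) := by
  have hMK : N/2 + (N-1-N/2) + 1 = N := by omega
  set M := N/2 with hM
  set K := N-1-N/2 with hK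
  have inner : ∀ a : ℕ, ∑ j ∈ Finset.range N, Ff (a + mm N j)
      = (∑ b ∈ Finset.range (M+1), Ff (a+b)) + (∑ b ∈ Finset.range (K+1), Ff (a+b))
        - Ff a := by
    intro a
    have := phi_split N hN (fun b => Ff (a+b))
    simpa using this
  have outer := phi_split N hN (fun a => ∑ j ∈ Finset.range N, Ff (a + mm N j))
  have hS : S1sum N
      = ∑ a ∈ Finset.range (M+1), (∑ j ∈ Finset.range N, Ff (a + mm N j))
        + ∑ a ∈ Finset.range (K+1), (∑ j ∈ Finset.range N, Ff (a + mm N j))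
        - ∑ j ∈ Finset.range N, Ff (0 + mm N j) := by
    rw [S1sum]; exact outer
  have hW0 : ∑ j ∈ Finset.range N, Ff (0 + mm N j) = Hh M + Hh K := by
    rw [inner 0]
    simp only [Nat.zero_add, Ff_zero]
    rw [sum_Ff_range, sum_Ff_range]; ring
  have hWA : ∑ a ∈ Finset.range (M+1), (∑ j ∈ Finset.range N, Ff (a + mm N j))
      = (Gg (M+M+1) - Gg M - Gg (M+1) + Hh M)
        + (Gg (M+K+1) - Gg M - Gg (K+1) + Hh K) - Hh M := by
    rw [Finset.sum_congr rfl (fun a _ => inner a), Finset.sum_sub_distrib,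
      Finset.sum_add_distrib, Rlem M M, Rlem M K, sum_Ff_range]
  have hWB : ∑ a ∈ Finset.range (K+1), (∑ j ∈ Finset.range N, Ff (a + mm N j))
      = (Gg (K+M+1) - Gg K - Gg (M+1) + Hh M)
        + (Gg (K+K+1) - Gg K - Gg (K+1) + Hh K) - Hh K := by
    rw [Finset.sum_congr rfl (fun a _ => inner a), Finset.sum_sub_distrib,
      Finset.sum_add_distrib, Rlem K M, Rlem K K, sum_Ff_range]
  rw [hS, hWA, hWB, hW0, hMK, show K + M + 1 = N from by omega,
    Gg_succ M, Gg_succ K, show M+M = 2*M from by ring, show K+K = 2*K from by ring]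
  ring

lemma S1_le (N : ℕ) (hN : 2 ≤ N) :
    S1sum N ≤ 4*(N:ℝ)*(Hh (2*(N/2)) - Hh (N/2)) := by
  rcases Nat.even_or_odd N with ⟨m, hm⟩ | ⟨m, hm⟩
  · -- even, N = m + m, m ≥ 1
    obtain ⟨k, rfl⟩ : ∃ k, m = k + 1 := ⟨m - 1, by omega⟩
    subst hm
    have e1 : (k+1+(k+1))/2 = k+1 := by omega
    have e2 : (k+1+(k+1)) - 1 - (k+1) = k := by omega
    rw [S1_eq _ (by omega), e1, e2]
    have r1 : Hh (2*(k+1)+1) = Hh (2*(k+1)) + 1/(2*(k:ℝ)+3) := by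
      rw [show 2*(k+1)+1 = (2*k+2)+1 from by ring, Hh_succ,
        show 2*(k+1) = 2*k+2 from by ring]
      push_cast; ring_nf
    have r2 : Hh (2*k+1) = Hh (2*(k+1)) - 1/(2*(k:ℝ)+2) := by
      have := Hh_succ (2*k+1)
      rw [show 2*k+1+1 = 2*(k+1) from by ring] at this
      rw [this]; push_cast; ring_nf
    have r3 : Hh k = Hh (k+1) - 1/((k:ℝ)+1) := by
      have := Hh_succ k
      rw [this]; push_cast; ring
    have key : Gg (2*(k+1)+1) + Gg (2*k+1) + 2*Gg (k+1+(k+1))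
        - 4*Gg (k+1) - 4*Gg k - 2*Hh (k+1) - 2*Hh k
        = 4*((k:ℝ)+1+(k+1))*(Hh (2*(k+1)) - Hh (k+1)) - 3/(2*(k:ℝ)+2) := by
      simp only [Gg, r1, r2, r3, show k+1+(k+1) = 2*(k+1) from by ring]
      push_cast
      have d1 : (2*(k:ℝ)+3) ≠ 0 := by positivity
      have d2 : (2*(k:ℝ)+2) ≠ 0 := by positivity
      have d3 : ((k:ℝ)+1) ≠ 0 := by positivity
      field_simp
      ring
    rw [key]
    have : 0 < 3/(2*(k:ℝ)+2) := by positivity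
    push_cast
    linarith
  · -- odd, N = 2m+1, m ≥ 1
    obtain ⟨k, rfl⟩ : ∃ k, m = k + 1 := ⟨m - 1, by omega⟩
    subst hm
    have e1 : (2*(k+1)+1)/2 = k+1 := by omega
    have e2 : (2*(k+1)+1) - 1 - (k+1) = k+1 := by omega
    rw [S1_eq _ (by omega), e1, e2]
    have r1 : Hh (2*(k+1)+1) = Hh (2*(k+1)) + 1/(2*(k:ℝ)+3) := by
      rw [show 2*(k+1)+1 = (2*k+2)+1 from by ring, Hh_succ,
        show 2*(k+1) = 2*k+2 from by ring]
      push_cast; ring_nf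
    have key : Gg (2*(k+1)+1) + Gg (2*(k+1)+1) + 2*Gg (2*(k+1)+1)
        - 4*Gg (k+1) - 4*Gg (k+1) - 2*Hh (k+1) - 2*Hh (k+1)
        = 4*(2*((k:ℝ)+1)+1)*(Hh (2*(k+1)) - Hh (k+1)) := by
      simp only [Gg, r1]
      push_cast
      have d1 : (2*(k:ℝ)+3) ≠ 0 := by positivity
      field_simp
      ring
    rw [key]
    exact le_of_eq (by push_cast; ring)

lemma neg_log_ge (a : ℝ) (ha : 9 ≤ a) :
    1/(a+1) + (3/8)*(1/(a+1) - 1/(a+2)) ≤ Real.log (a+1) - Real.log a := by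
  set y : ℝ := 1/(a+1) with hy
  have ha0 : (0:ℝ) < a := by linarith
  have ha1 : (0:ℝ) < a + 1 := by linarith
  have hy0 : 0 < y := by positivity
  have hy10 : y ≤ 1/10 := by
    rw [hy, div_le_div_iff₀ ha1 (by norm_num)]; linarith
  have hlog : Real.log (a+1) - Real.log a = -Real.log (1 - y) := by
    have h1y : 1 - y = a / (a+1) := by
      rw [hy]; field_simp; ring
    rw [h1y, Real.log_div (ne_of_gt ha0) (ne_of_gt ha1)]; ring
  have htaylor := Real.abs_log_sub_add_sum_range_le
    (x := y) (by rw [abs_of_pos hy0]; linarith) 2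
  have hsum : ∑ i ∈ Finset.range 2, y^(i+1)/((i:ℝ)+1) = y + y^2/2 := by
    simp [Finset.sum_range_succ]; ring
  rw [hsum, abs_of_pos hy0] at htaylor
  have hup : y + y^2/2 + Real.log (1-y) ≤ y^3/(1-y) := by
    have h2 := (abs_le.1 htaylor).2
    norm_num at h2 ⊢
    linarith
  have hkey : y + y^2/2 - y^3/(1-y) ≤ -Real.log (1-y) := by linarith
  have h2 : 1/(a+2) = y/(1+y) := by
    rw [hy]; rw [div_eq_div_iff (by linarith) (by positivity)]; field_simp; ring
  rw [hlog, h2]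
  have hden : (0:ℝ) < 1 - y := by linarith
  have hden2 : (0:ℝ) < 1 + y := by linarith
  have hy3 : (0:ℝ) ≤ y^3 := by positivity
  have h4 : y^3*y ≤ y^3*(1/10) := mul_le_mul_of_nonneg_left hy10 hy3
  have hfrac1 : y^3/(1-y) ≤ (10/9)*y^3 := by
    rw [div_le_iff₀ hden]; nlinarith
  have hfrac2 : (3/8)*(y - y/(1+y)) ≤ (3/8)*y^2 := by
    have he : y - y/(1+y) = y^2/(1+y) := by field_simp; ring
    rw [he]
    have : y^2/(1+y) ≤ y^2 := by
      rw [div_le_iff₀ hden2]; nlinarith [sq_nonneg y]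
    linarith
  nlinarith [hkey, hfrac1, hfrac2]

lemma HH_le (M : ℕ) (hM : 10 ≤ M) :
    Hh (2*M) - Hh M ≤ Real.log 2 - (3/8)*(1/((M:ℝ)+1) - 1/(2*(M:ℝ)+1)) := by
  have t1 : Hh (2*M) - Hh M = ∑ i ∈ Finset.range M, 1/((M:ℝ)+(i:ℝ)+1) := by
    have h := Finset.sum_range_sub (f := fun i => Hh (M+i)) M
    calc Hh (2*M) - Hh M = Hh (M+M) - Hh (M+0) := by rw [two_mul, Nat.add_zero]
      _ = ∑ i ∈ Finset.range M, (Hh (M+(i+1)) - Hh (M+i)) := h.symm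
      _ = ∑ i ∈ Finset.range M, 1/((M:ℝ)+(i:ℝ)+1) := by
          refine Finset.sum_congr rfl fun i _ => ?_
          rw [show M+(i+1) = (M+i)+1 from by omega, Hh_succ]
          push_cast; ring
  have t2 : ∑ i ∈ Finset.range M, (Real.log ((M:ℝ)+i+1) - Real.log ((M:ℝ)+i))
      = Real.log 2 := by
    have h := Finset.sum_range_sub (f := fun i => Real.log ((M:ℝ)+i)) M
    calc ∑ i ∈ Finset.range M, (Real.log ((M:ℝ)+i+1) - Real.log ((M:ℝ)+i))
        = ∑ i ∈ Finset.range M, (Real.log ((M:ℝ)+(i+1:ℕ)) - Real.log ((M:ℝ)+i)) := by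
          refine Finset.sum_congr rfl fun i _ => ?_
          push_cast; ring_nf
      _ = Real.log ((M:ℝ)+(M:ℕ)) - Real.log ((M:ℝ)+(0:ℕ)) := h
      _ = Real.log 2 := by
          push_cast
          rw [show ((M:ℝ)+(M:ℝ)) = 2*(M:ℝ) from by ring, add_zero,
            Real.log_mul (by norm_num) (by positivity : ((M:ℝ)) ≠ 0)]
          ring
  have t3 : ∑ i ∈ Finset.range M, (1/((M:ℝ)+i+1) - 1/((M:ℝ)+i+2))
      = 1/((M:ℝ)+1) - 1/(2*(M:ℝ)+1) := by
    have h := Finset.sum_range_sub (f := fun i => -(1/((M:ℝ)+i+1))) M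
    calc ∑ i ∈ Finset.range M, (1/((M:ℝ)+i+1) - 1/((M:ℝ)+i+2))
        = ∑ i ∈ Finset.range M, (-(1/((M:ℝ)+(i+1:ℕ)+1)) - -(1/((M:ℝ)+i+1))) := by
          refine Finset.sum_congr rfl fun i _ => ?_
          push_cast; ring_nf
      _ = -(1/((M:ℝ)+(M:ℕ)+1)) - -(1/((M:ℝ)+(0:ℕ)+1)) := h
      _ = 1/((M:ℝ)+1) - 1/(2*(M:ℝ)+1) := by push_cast; ring
  have per : ∀ i ∈ Finset.range M,
      1/((M:ℝ)+(i:ℝ)+1)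
        ≤ (Real.log ((M:ℝ)+i+1) - Real.log ((M:ℝ)+i))
          - (3/8)*(1/((M:ℝ)+i+1) - 1/((M:ℝ)+i+2)) := by
    intro i _
    have hm9 : (10:ℝ) ≤ (M:ℝ) := by exact_mod_cast hM
    have hi0 : (0:ℝ) ≤ (i:ℝ) := Nat.cast_nonneg i
    have h9 : (9:ℝ) ≤ (M:ℝ)+i := by linarith
    have := neg_log_ge ((M:ℝ)+i) h9
    have e1 : ((M:ℝ)+i)+1 = (M:ℝ)+i+1 := by ring
    have e2 : ((M:ℝ)+i)+2 = (M:ℝ)+i+2 := by ring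
    rw [e1, e2] at this
    linarith
  have hsum := Finset.sum_le_sum per
  rw [Finset.sum_sub_distrib, t2, ← Finset.mul_sum, t3] at hsum
  linarith [t1 ▸ hsum]

lemma Hh_le_log (N : ℕ) (h : 1 ≤ N) : Hh N ≤ 1 + Real.log N := by
  induction N with
  | zero => omega
  | succ n ih =>
      rcases Nat.eq_or_lt_of_le h with h1 | h1
      · rw [← h1]; norm_num [Hh_one]
      · have hn : 1 ≤ n := by omega
        have hn0 : (0:ℝ) < (n:ℝ) := by exact_mod_cast hn
        have hlog := Real.log_le_sub_one_of_pos
          (show (0:ℝ) < (n:ℝ)/((n:ℝ)+1) by positivity)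
        rw [Real.log_div (ne_of_gt hn0) (by positivity)] at hlog
        have he : (n:ℝ)/((n:ℝ)+1) - 1 = -(1/((n:ℝ)+1)) := by field_simp; ring
        have := ih hn
        rw [Hh_succ]
        push_cast
        linarith

lemma Ff_nonneg (r : ℕ) : 0 ≤ Ff r := by
  rw [Ff]; split_ifs <;> positivity

noncomputable def Ff2 (r : ℕ) : ℝ := if r = 0 then 0 else 1/(r:ℝ)^2

lemma Ff2_nonneg (r : ℕ) : 0 ≤ Ff2 r := by
  rw [Ff2]; split_ifs <;> positivity

lemma Hh_nonneg (n : ℕ) : 0 ≤ Hh n := by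
  rw [Hh]; exact Finset.sum_nonneg fun r _ => by positivity

lemma Hh_eq_range (n : ℕ) : Hh n = ∑ i ∈ Finset.range n, 1/((i:ℝ)+1) := by
  induction n with
  | zero => simp [Hh_zero]
  | succ n ih => rw [Hh_succ, Finset.sum_range_succ, ih]

lemma Ff2_le (a b : ℕ) : Ff2 (a+b) ≤ 4 * (1/((a:ℝ)+1)) * (1/((b:ℝ)+1)) := by
  rcases Nat.eq_zero_or_pos (a+b) with h | h
  · rw [Ff2, if_pos h]; positivity
  · rw [Ff2, if_neg (by omega)]
    have ha : (0:ℝ) ≤ (a:ℝ) := Nat.cast_nonneg a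
    have hb : (0:ℝ) ≤ (b:ℝ) := Nat.cast_nonneg b
    have hab : (1:ℝ) ≤ (a:ℝ)+(b:ℝ) := by
      have : (1:ℕ) ≤ a + b := h
      exact_mod_cast this
    have he : 4 * (1/((a:ℝ)+1)) * (1/((b:ℝ)+1)) = 4/(((a:ℝ)+1)*((b:ℝ)+1)) := by
      field_simp
    rw [he]
    push_cast
    rw [div_le_div_iff₀ (by positivity) (by positivity)]
    nlinarith

noncomputable def S2sum (N : ℕ) : ℝ :=
  ∑ i ∈ Finset.range N, ∑ j ∈ Finset.range N, Ff2 (mm N i + mm N j)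

lemma sumA_le (N : ℕ) (h1 : 1 ≤ N) :
    ∑ i ∈ Finset.range N, 1/((mm N i:ℝ)+1) ≤ 2*Hh N := by
  have point : ∀ i ∈ Finset.range N,
      1/((mm N i:ℝ)+1) ≤ 1/((i:ℝ)+1) + 1/((N:ℝ)-(i:ℝ)) := by
    intro i hi
    have hiN : i < N := Finset.mem_range.mp hi
    have hNi : (0:ℝ) < (N:ℝ)-(i:ℝ) := by
      have : (i:ℝ) < (N:ℝ) := by exact_mod_cast hiN
      linarith
    rcases le_or_gt i (N/2) with hc | hc
    · rw [mm_low hc]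
      have : (0:ℝ) < 1/((N:ℝ)-(i:ℝ)) := by positivity
      linarith
    · rw [mm_high hc (by omega)]
      have hcast : ((N - i : ℕ) : ℝ) = (N:ℝ)-(i:ℝ) := by
        rw [Nat.cast_sub (by omega)]
      rw [hcast]
      have h2 : 1/((N:ℝ)-(i:ℝ)+1) ≤ 1/((N:ℝ)-(i:ℝ)) := by
        apply one_div_le_one_div_of_le hNi; linarith
      have h3 : (0:ℝ) < 1/((i:ℝ)+1) := by positivity
      linarith
  have e1 : ∑ i ∈ Finset.range N, 1/((i:ℝ)+1) = Hh N := (Hh_eq_range N).symm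
  have e2 : ∑ i ∈ Finset.range N, 1/((N:ℝ)-(i:ℝ)) = Hh N := by
    rw [Hh_eq_range]
    rw [← Finset.sum_range_reflect (fun i => 1/((N:ℝ)-(i:ℝ))) N]
    refine Finset.sum_congr rfl fun j hj => ?_
    have hjN : j < N := Finset.mem_range.mp hj
    have hcast : ((N - 1 - j : ℕ) : ℝ) = (N:ℝ)-1-(j:ℝ) := by
      have h' : N - 1 - j = N - (1+j) := by omega
      rw [h', Nat.cast_sub (by omega)]
      push_cast
      all_goals ring
    rw [hcast]
    congr 1
    ring
  have := Finset.sum_le_sum point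
  rw [Finset.sum_add_distrib, e1, e2] at this
  linarith

lemma S2_le (N : ℕ) (h1 : 1 ≤ N) : S2sum N ≤ 16*(Hh N)^2 := by
  have hA0 : 0 ≤ ∑ i ∈ Finset.range N, 1/((mm N i:ℝ)+1) :=
    Finset.sum_nonneg fun i _ => by positivity
  have hA := sumA_le N h1
  have step : S2sum N
      ≤ ∑ i ∈ Finset.range N, ∑ j ∈ Finset.range N,
          4 * (1/((mm N i:ℝ)+1)) * (1/((mm N j:ℝ)+1)) := by
    refine Finset.sum_le_sum fun i _ => Finset.sum_le_sum fun j _ => Ff2_le _ _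
  have expand : ∑ i ∈ Finset.range N, ∑ j ∈ Finset.range N,
      4 * (1/((mm N i:ℝ)+1)) * (1/((mm N j:ℝ)+1))
      = 4 * ((∑ i ∈ Finset.range N, 1/((mm N i:ℝ)+1))
          * (∑ j ∈ Finset.range N, 1/((mm N j:ℝ)+1))) := by
    rw [Finset.sum_mul_sum]
    rw [Finset.mul_sum]
    refine Finset.sum_congr rfl fun i _ => ?_
    rw [Finset.mul_sum]
    refine Finset.sum_congr rfl fun j _ => by ring
  rw [expand] at step
  nlinarith [Hh_nonneg N]

section glue
variable {N : ℕ} [NeZero N]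

lemma rhoN_eq (x : ZMod N) : rhoN N x = mm N x.val := by
  have h := ZMod.val_lt x
  rw [rhoN, mm, Nat.min_def]
  split_ifs <;> omega

lemma torusDist_eq (u : Vtx N) : torusDist N u 0 = mm N u.1.val + mm N u.2.val := by
  rw [torusDist]
  simp only [Prod.fst_zero, Prod.snd_zero, sub_zero]
  rw [rhoN_eq, rhoN_eq]

lemma mm_le_half (i : ℕ) : mm N i ≤ N/2 := by
  rw [mm, Nat.min_def]; split_ifs <;> omega

lemma torusDist_le (u : Vtx N) : torusDist N u 0 ≤ N := by
  rw [torusDist_eq]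
  have h1 := mm_le_half (N := N) u.1.val
  have h2 := mm_le_half (N := N) u.2.val
  omega

lemma torusDist_eq_zero_iff (u : Vtx N) : torusDist N u 0 = 0 ↔ u = 0 := by
  rw [torusDist_eq]
  have h1 : u.1.val < N := ZMod.val_lt u.1
  have h2 : u.2.val < N := ZMod.val_lt u.2
  have hz1 : mm N u.1.val = 0 ↔ u.1.val = 0 := by
    rw [mm, Nat.min_def]; split_ifs <;> omega
  have hz2 : mm N u.2.val = 0 ↔ u.2.val = 0 := by
    rw [mm, Nat.min_def]; split_ifs <;> omega
  constructor
  · intro h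
    have e1 : u.1.val = 0 := hz1.mp (by omega)
    have e2 : u.2.val = 0 := hz2.mp (by omega)
    have p1 : u.1 = 0 := (ZMod.val_eq_zero u.1).mp e1
    have p2 : u.2 = 0 := (ZMod.val_eq_zero u.2).mp e2
    exact Prod.ext p1 p2
  · intro h
    subst h
    simp only [Prod.fst_zero, Prod.snd_zero, ZMod.val_zero]
    have : mm N 0 = 0 := by rw [mm, Nat.min_def]; split_ifs <;> omega
    omega

lemma zmod_sum (g : ℕ → ℝ) : ∑ x : ZMod N, g x.val = ∑ i ∈ Finset.range N, g i := by
  refine Finset.sum_nbij' (fun x => x.val) (fun i => (i : ZMod N)) ?_ ?_ ?_ ?_ ?_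
  · intro x _; exact Finset.mem_range.mpr (ZMod.val_lt x)
  · intro i _; exact Finset.mem_univ _
  · intro x _; exact ZMod.natCast_rightInverse x
  · intro i hi; exact ZMod.val_cast_of_lt (Finset.mem_range.mp hi)
  · intro x _; rfl

lemma vtx_sum (g : ℕ → ℝ) :
    ∑ u : Vtx N, g (torusDist N u 0)
      = ∑ i ∈ Finset.range N, ∑ j ∈ Finset.range N, g (mm N i + mm N j) := by
  rw [Fintype.sum_prod_type]
  calc ∑ x : ZMod N, ∑ y : ZMod N, g (torusDist N (x,y) 0)
      = ∑ x : ZMod N, ∑ j ∈ Finset.range N, g (mm N x.val + mm N j) := by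
        refine Finset.sum_congr rfl fun x _ => ?_
        rw [← zmod_sum (N := N) (fun v => g (mm N x.val + mm N v))]
        refine Finset.sum_congr rfl fun y _ => ?_
        rw [torusDist_eq]
    _ = _ := zmod_sum (N := N) (fun i => ∑ j ∈ Finset.range N, g (mm N i + mm N j))

end glue


set_option maxHeartbeats 1000000 in
/-- At the critical value `c = 1/(4 log 2)`, for all large `N`,
`Σ_{r=1}^{N} N_r·(−log(1 − p_r)) ≤ 1`. -/
theorem stmt7 :
    ∃ N₀ : ℕ, ∀ N : ℕ, N₀ ≤ N →
      ∑ r ∈ Finset.Icc 1 N, (Nr N r : ℝ) * (-Real.log (1 - pr N ccr r)) ≤ 1 := by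
  classical
  refine ⟨640000, fun N hN => ?_⟩
  haveI : NeZero N := ⟨by omega⟩
  have hN0 : (0:ℝ) < (N:ℝ) := by exact_mod_cast (by omega : 0 < N)
  have hNne : (N:ℝ) ≠ 0 := ne_of_gt hN0
  have hl2 : (0.6931471803:ℝ) < Real.log 2 := Real.log_two_gt_d9
  have hl2' : Real.log 2 < 0.6931471808 := Real.log_two_lt_d9
  have hl2pos : (0:ℝ) < Real.log 2 := by linarith
  have hl2ne : Real.log 2 ≠ 0 := ne_of_gt hl2pos
  have hccr_pos : (0:ℝ) < ccr := by rw [ccr]; positivity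
  have hccr_half : ccr ≤ 1/2 := by
    rw [ccr, div_le_div_iff₀ (by linarith) (by norm_num)]
    linarith
  set s : Finset (Vtx N) := Finset.univ.filter (fun u => torusDist N u 0 ≠ 0) with hs
  have hmaps : ∀ u ∈ s, torusDist N u 0 ∈ Finset.Icc 1 N := by
    intro u hu
    rw [hs, Finset.mem_filter] at hu
    have := torusDist_le u
    exact Finset.mem_Icc.mpr ⟨by omega, this⟩
  have hNr : ∀ r ∈ Finset.Icc 1 N,
      Nr N r = (s.filter (fun u => torusDist N u 0 = r)).card := by
    intro r hr
    have hr1 : 1 ≤ r := (Finset.mem_Icc.mp hr).1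
    rw [Nr, Set.ncard_eq_toFinset_card', Set.toFinset_setOf]
    congr 1
    rw [hs, Finset.filter_filter]
    refine Finset.filter_congr fun u _ => ?_
    constructor
    · intro h; exact ⟨by omega, h⟩
    · rintro ⟨-, h⟩; exact h
  have step1 : ∑ r ∈ Finset.Icc 1 N, (Nr N r : ℝ) * (-Real.log (1 - pr N ccr r))
      = ∑ u ∈ s, -Real.log (1 - pr N ccr (torusDist N u 0)) := by
    rw [← Finset.sum_fiberwise_of_maps_to' hmaps (fun r => -Real.log (1 - pr N ccr r))]
    refine Finset.sum_congr rfl fun r hr => ?_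
    rw [Finset.sum_const, nsmul_eq_mul, hNr r hr]
  have point : ∀ u ∈ s, -Real.log (1 - pr N ccr (torusDist N u 0))
      ≤ (ccr/(N:ℝ)) * Ff (torusDist N u 0)
        + (2*ccr^2/(N:ℝ)^2) * Ff2 (torusDist N u 0) := by
    intro u hu
    rw [hs, Finset.mem_filter] at hu
    set r : ℕ := torusDist N u 0 with hrdef
    have hr1 : 1 ≤ r := by omega
    have hrR : (1:ℝ) ≤ (r:ℝ) := by exact_mod_cast hr1
    have hNR : (1:ℝ) ≤ (N:ℝ) := by exact_mod_cast (by omega : 1 ≤ N)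
    have hNr_pos : (0:ℝ) < (N:ℝ)*(r:ℝ) := by nlinarith
    have hNr_one : (1:ℝ) ≤ (N:ℝ)*(r:ℝ) := by nlinarith
    set x : ℝ := ccr / ((N:ℝ)*(r:ℝ)) with hx
    have hx0 : 0 < x := by rw [hx]; positivity
    have hx_le : x ≤ ccr := by
      rw [hx]; exact div_le_self hccr_pos.le hNr_one
    have hx_half : x ≤ 1/2 := le_trans hx_le hccr_half
    have hpr : pr N ccr r = x := by
      rw [pr]; exact min_eq_left (by linarith)
    rw [hpr]
    have h1x : (0:ℝ) < 1 - x := by linarith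
    have hlogle := Real.log_le_sub_one_of_pos (show (0:ℝ) < (1-x)⁻¹ by positivity)
    rw [Real.log_inv] at hlogle
    have he : (1-x)⁻¹ - 1 = x/(1-x) := by field_simp; ring
    have hb : x/(1-x) ≤ x + 2*x^2 := by
      rw [div_le_iff₀ h1x]; nlinarith
    have hres : -Real.log (1-x) ≤ x + 2*x^2 := by linarith
    have hFf : Ff r = 1/(r:ℝ) := Ff_eq r (by omega)
    have hFf2 : Ff2 r = 1/(r:ℝ)^2 := by rw [Ff2, if_neg (by omega)]
    rw [hFf, hFf2]
    have hxe : x + 2*x^2 = (ccr/(N:ℝ)) * (1/(r:ℝ))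
        + (2*ccr^2/(N:ℝ)^2) * (1/(r:ℝ)^2) := by
      rw [hx]; field_simp
    linarith
  have hcoef1 : (0:ℝ) ≤ ccr/(N:ℝ) := div_nonneg hccr_pos.le hN0.le
  have hcoef2 : (0:ℝ) ≤ 2*ccr^2/(N:ℝ)^2 := by positivity
  have sum_bound : ∑ u ∈ s, -Real.log (1 - pr N ccr (torusDist N u 0))
      ≤ (ccr/(N:ℝ)) * S1sum N + (2*ccr^2/(N:ℝ)^2) * S2sum N := by
    calc ∑ u ∈ s, -Real.log (1 - pr N ccr (torusDist N u 0))
        ≤ ∑ u ∈ s, ((ccr/(N:ℝ)) * Ff (torusDist N u 0)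
            + (2*ccr^2/(N:ℝ)^2) * Ff2 (torusDist N u 0)) := Finset.sum_le_sum point
      _ ≤ ∑ u ∈ Finset.univ, ((ccr/(N:ℝ)) * Ff (torusDist N u 0)
            + (2*ccr^2/(N:ℝ)^2) * Ff2 (torusDist N u 0)) := by
          refine Finset.sum_le_sum_of_subset_of_nonneg ?_ ?_
          · rw [hs]; exact Finset.filter_subset _ _
          · intro u _ _
            exact add_nonneg (mul_nonneg hcoef1 (Ff_nonneg _))
              (mul_nonneg hcoef2 (Ff2_nonneg _))
      _ = (ccr/(N:ℝ)) * S1sum N + (2*ccr^2/(N:ℝ)^2) * S2sum N := by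
          rw [Finset.sum_add_distrib, ← Finset.mul_sum, ← Finset.mul_sum,
            vtx_sum Ff, vtx_sum Ff2, S1sum, S2sum]
  -- numeric part
  set M : ℕ := N / 2 with hM
  have hM10 : 10 ≤ M := by omega
  have hS1 := S1_le N (by omega)
  rw [← hM] at hS1
  have hHH := HH_le M hM10
  have hδ : 1/(3*(N:ℝ)) ≤ 1/((M:ℝ)+1) - 1/(2*(M:ℝ)+1) := by
    have e : 1/((M:ℝ)+1) - 1/(2*(M:ℝ)+1) = (M:ℝ)/(((M:ℝ)+1)*(2*(M:ℝ)+1)) := by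
      field_simp; ring
    rw [e, div_le_div_iff₀ (by positivity) (by positivity)]
    have h2MN : (2*(M:ℝ)) ≤ (N:ℝ) := by exact_mod_cast (by omega : 2*M ≤ N)
    have h10 : (10:ℝ) ≤ (M:ℝ) := by exact_mod_cast hM10
    nlinarith
  have hmain : (ccr/(N:ℝ)) * S1sum N ≤ 1 - ccr/(2*(N:ℝ)) := by
    have c1 : (ccr/(N:ℝ)) * S1sum N
        ≤ (ccr/(N:ℝ)) * (4*(N:ℝ)*(Hh (2*M) - Hh M)) :=
      mul_le_mul_of_nonneg_left hS1 hcoef1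
    have c2 : 4*(N:ℝ)*(Hh (2*M) - Hh M)
        ≤ 4*(N:ℝ)*(Real.log 2 - (3/8)*(1/((M:ℝ)+1) - 1/(2*(M:ℝ)+1))) :=
      mul_le_mul_of_nonneg_left hHH (by positivity)
    have c2' : (ccr/(N:ℝ)) * (4*(N:ℝ)*(Hh (2*M) - Hh M))
        ≤ (ccr/(N:ℝ)) * (4*(N:ℝ)*(Real.log 2 - (3/8)*(1/((M:ℝ)+1) - 1/(2*(M:ℝ)+1)))) :=
      mul_le_mul_of_nonneg_left c2 hcoef1
    have c3 : (ccr/(N:ℝ)) * (4*(N:ℝ)*(Real.log 2 - (3/8)*(1/((M:ℝ)+1) - 1/(2*(M:ℝ)+1))))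
        ≤ (ccr/(N:ℝ)) * (4*(N:ℝ)*(Real.log 2 - (3/8)*(1/(3*(N:ℝ))))) := by
      refine mul_le_mul_of_nonneg_left ?_ hcoef1
      refine mul_le_mul_of_nonneg_left ?_ (by positivity)
      linarith
    have c4 : (ccr/(N:ℝ)) * (4*(N:ℝ)*(Real.log 2 - (3/8)*(1/(3*(N:ℝ)))))
        = 1 - ccr/(2*(N:ℝ)) := by
      rw [ccr]; field_simp; ring
    linarith
  -- error term
  set L : ℝ := Real.log N with hL
  have hL0 : 0 ≤ L := by
    rw [hL]; exact Real.log_nonneg (by exact_mod_cast (by omega : 1 ≤ N))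
  have h25 : 32*(1+L)^2 ≤ (N:ℝ) := by
    set sN := Real.sqrt (N:ℝ) with hsN
    set t := Real.sqrt sN with ht
    have hs0 : 0 ≤ sN := Real.sqrt_nonneg _
    have ht0 : 0 ≤ t := Real.sqrt_nonneg _
    have hss : sN * sN = (N:ℝ) := Real.mul_self_sqrt (by positivity)
    have htt : t * t = sN := Real.mul_self_sqrt hs0
    have hNbig : (640000:ℝ) ≤ (N:ℝ) := by exact_mod_cast hN
    have hs800 : 800 ≤ sN := by
      have h800 : (800:ℝ) = Real.sqrt 640000 := by
        rw [show (640000:ℝ) = 800^2 by norm_num, Real.sqrt_sq (by norm_num)]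
      rw [hsN, h800]
      exact Real.sqrt_le_sqrt hNbig
    have ht1 : 1 ≤ t := by
      have h1 : (1:ℝ) = Real.sqrt 1 := by rw [Real.sqrt_one]
      rw [ht, h1]
      exact Real.sqrt_le_sqrt (by linarith)
    have hlogt : Real.log t ≤ t - 1 := Real.log_le_sub_one_of_pos (by linarith)
    have hlogN : L = 4 * Real.log t := by
      have e1 : Real.log (N:ℝ) = 2 * Real.log sN := by
        rw [hsN, Real.log_sqrt (by positivity)]; ring
      have e2 : Real.log sN = 2 * Real.log t := by
        rw [ht, Real.log_sqrt hs0]; ring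
      rw [hL, e1, e2]; ring
    have h1L : 1 + L ≤ 4*t := by rw [hlogN]; linarith
    have h1L0 : 0 ≤ 1 + L := by linarith
    nlinarith [mul_self_le_mul_self h1L0 h1L,
      mul_nonneg (by linarith : (0:ℝ) ≤ sN - 800) hs0]
  have hS2 : S2sum N ≤ 16*(1+L)^2 := by
    have h1 := S2_le N (by omega)
    have h2 : Hh N ≤ 1 + L := by rw [hL]; exact Hh_le_log N (by omega)
    nlinarith [Hh_nonneg N]
  have herr : (2*ccr^2/(N:ℝ)^2) * S2sum N ≤ ccr/(2*(N:ℝ)) := by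
    have h1 : (2*ccr^2/(N:ℝ)^2) * S2sum N ≤ (2*ccr^2/(N:ℝ)^2) * (16*(1+L)^2) :=
      mul_le_mul_of_nonneg_left hS2 hcoef2
    have key : 64*ccr*(1+L)^2 ≤ (N:ℝ) := by
      have := mul_le_mul_of_nonneg_right hccr_half (sq_nonneg (1+L))
      nlinarith
    have h2 : (2*ccr^2/(N:ℝ)^2) * (16*(1+L)^2) ≤ ccr/(2*(N:ℝ)) := by
      rw [div_mul_eq_mul_div, div_le_div_iff₀ (by positivity) (by positivity)]
      nlinarith [mul_le_mul_of_nonneg_right key (mul_nonneg hccr_pos.le hN0.le)]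
    linarith
  rw [step1]
  linarith [sum_bound, hmain, herr]
end
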